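/- Let z be a T-periodic C² solution of z'' + c·z' + b·d·exp(2z) = a·c + b·f(t) and let t₊ be a point where z attains its minimum over [0, T]. Then for all t ≥ t₊, z'(t) ≤ a·c·T + b·‖f⁺‖₁, where ‖f⁺‖₁ = ∫₀ᵀ max(f(s), 0) ds. -/

import Mathlib

theorem stmt8 (a b c d T : ℝ) (ha : 0 < a) (hb : 0 < b) (hc : 0 < c) (hd : 0 < d)
    (hT : 0 < T) (f : ℝ → ℝ) (hf : Continuous f) (hfper : Function.Periodic f T)
    (hfmean : ∫ t in (0 : ℝ)..T, f t = 0)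
    (z z' z'' : ℝ → ℝ)
    (hz1 : ∀ t, HasDerivAt z (z' t) t)
    (hz2 : ∀ t, HasDerivAt z' (z'' t) t)
    (hz''cont : Continuous z'')
    (hzper : Function.Periodic z T)
    (heq : ∀ t, z'' t + c * z' t + b * d * Real.exp (2 * z t) = a * c + b * f t)
    (tmin : ℝ) (htmin : tmin ∈ Set.Icc (0 : ℝ) T)
    (hmin : ∀ s ∈ Set.Icc (0 : ℝ) T, z tmin ≤ z s) :
    ∀ t, tmin ≤ t → z' t ≤ a * c * T + b * ∫ s in (0 : ℝ)..T, max (f s) 0 := by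
  intro t ht
  -- continuity facts
  have hzc : Continuous z := by
    rw [continuous_iff_continuousAt]; exact fun s => (hz1 s).continuousAt
  have hz'c : Continuous z' := by
    rw [continuous_iff_continuousAt]; exact fun s => (hz2 s).continuousAt
  -- z' is periodic
  have hz'per : Function.Periodic z' T := by
    intro s
    have h1 : HasDerivAt (fun u => z (u + T)) (z' (s + T)) s := by
      exact HasDerivAt.comp_add_const s T (hz1 (s + T))
    have h2 : (fun u => z (u + T)) = z := funext fun u => hzper u
    rw [h2] at h1
    exact h1.unique (hz1 s)
  -- global minimum
  have hgmin : ∀ s : ℝ, z tmin ≤ z s := by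
    intro s
    have hfr0 : 0 ≤ s - ⌊s / T⌋ * T := by
      have := Int.sub_floor_div_mul_nonneg s hT
      linarith
    have hfr1 : s - ⌊s / T⌋ * T ≤ T := by
      have := Int.sub_floor_div_mul_lt s hT
      linarith
    have : z (s - ⌊s / T⌋ * T) = z s := hzper.sub_int_mul_eq ⌊s / T⌋
    rw [← this]
    exact hmin _ ⟨hfr0, hfr1⟩
  have hz'tmin : z' tmin = 0 := by
    have hloc : IsLocalMin z tmin := by
      apply Filter.Eventually.of_forall (fun s => hgmin s)
    exact hloc.hasDerivAt_eq_zero (hz1 tmin)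
  -- the function g
  set g : ℝ → ℝ := fun s => a * c - b * d * Real.exp (2 * z s) + b * f s with hg
  have hgc : Continuous g := by
    fun_prop
  have hgint : ∀ t₁ t₂ : ℝ, IntervalIntegrable g MeasureTheory.volume t₁ t₂ :=
    fun t₁ t₂ => hgc.intervalIntegrable t₁ t₂
  have hgper : Function.Periodic g T := by
    intro s
    simp only [hg, hzper s, hfper s]
  -- F := z' + c*z has derivative g
  have hF : ∀ s : ℝ, HasDerivAt (fun u => z' u + c * z u) (g s) s := by
    intro s
    have h1 := (hz2 s).add ((hz1 s).const_mul c)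
    have h2 : z'' s + c * z' s = g s := by
      have := heq s
      simp only [hg]; linarith
    rw [h2] at h1; exact h1
  have hFTC : ∀ t₁ t₂ : ℝ, ∫ s in t₁..t₂, g s =
      (z' t₂ + c * z t₂) - (z' t₁ + c * z t₁) := by
    intro t₁ t₂
    exact intervalIntegral.integral_eq_sub_of_hasDerivAt (fun s _ => hF s) (hgint t₁ t₂)
  -- integral of g over a period is zero
  have hg0 : ∫ s in (0:ℝ)..T, g s = 0 := by
    rw [hFTC 0 T]
    have h1 : z T = z 0 := by simpa using hzper 0
    have h2 : z' T = z' 0 := by simpa using hz'per 0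
    rw [h1, h2]; ring
  -- decompose t
  set k : ℤ := ⌊(t - tmin) / T⌋ with hk
  set u : ℝ := tmin + k * T with hu
  have hut : u ≤ t := by
    have := Int.sub_floor_div_mul_nonneg (t - tmin) hT
    simp only [hu, hk]; linarith
  have htu : t ≤ u + T := by
    have := Int.sub_floor_div_mul_lt (t - tmin) hT
    simp only [hu, hk]; linarith
  -- z' t ≤ ∫ in tmin..t of g
  have key : z' t ≤ ∫ s in tmin..t, g s := by
    rw [hFTC tmin t, hz'tmin]
    have := hgmin t
    nlinarith [hgmin t]
  -- split the integral
  have hsplit : ∫ s in tmin..t, g s = ∫ s in u..t, g s := by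
    have h1 : ∫ s in tmin..u, g s = 0 := by
      have := hgper.intervalIntegral_add_zsmul_eq k tmin hgint
      rw [hgper.intervalIntegral_add_eq tmin 0, zero_add, hg0, smul_zero] at this
      simpa [hu, zsmul_eq_mul] using this
    rw [← intervalIntegral.integral_add_adjacent_intervals (hgint tmin u) (hgint u t), h1,
      zero_add]
  -- pointwise bound for g
  have hfcont : Continuous (fun s => max (f s) 0) := hf.max continuous_const
  have hb1 : ∫ s in u..t, g s ≤ ∫ s in u..t, (a * c + b * max (f s) 0) := by
    apply intervalIntegral.integral_mono_on hut (hgint u t)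
      ((continuous_const.add (continuous_const.mul hfcont)).intervalIntegrable u t)
    intro s _
    simp only [hg, Pi.add_apply, Pi.mul_apply]
    have h1 : 0 < b * d * Real.exp (2 * z s) := by positivity
    have h2 : f s ≤ max (f s) 0 := le_max_left _ _
    nlinarith
  have hb2 : ∫ s in u..t, (a * c + b * max (f s) 0) =
      a * c * (t - u) + b * ∫ s in u..t, max (f s) 0 := by
    rw [intervalIntegral.integral_add (g := fun s => b * max (f s) 0) (intervalIntegrable_const)
      ((continuous_const.mul hfcont).intervalIntegrable u t)]
    simp [intervalIntegral.integral_const_mul]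
    ring
  -- bound the f⁺ integral
  have hfpos_per : Function.Periodic (fun s => max (f s) 0) T := fun s => by
    simp [hfper s]
  have hb3 : ∫ s in u..t, max (f s) 0 ≤ ∫ s in (0:ℝ)..T, max (f s) 0 := by
    have he : ∫ s in u..(u+T), max (f s) 0 = ∫ s in (0:ℝ)..T, max (f s) 0 := by
      simpa using hfpos_per.intervalIntegral_add_eq u 0
    rw [← he, ← intervalIntegral.integral_add_adjacent_intervals
      (hfcont.intervalIntegrable u t) (hfcont.intervalIntegrable t (u+T))]
    have : 0 ≤ ∫ s in t..(u+T), max (f s) 0 :=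
      intervalIntegral.integral_nonneg htu (fun s _ => le_max_right _ _)
    linarith
  have hb4 : a * c * (t - u) ≤ a * c * T := by
    have : 0 < a * c := by positivity
    nlinarith
  calc z' t ≤ ∫ s in tmin..t, g s := key
    _ = ∫ s in u..t, g s := hsplit
    _ ≤ a * c * (t - u) + b * ∫ s in u..t, max (f s) 0 := by rw [← hb2]; exact hb1
    _ ≤ a * c * T + b * ∫ s in (0:ℝ)..T, max (f s) 0 := by
        have := mul_le_mul_of_nonneg_left hb3 hb.le
        linarith
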